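/- arXiv:1201.1256 — 3 statements merged into one kernel-verified Lean document; each statement's English description precedes it below -/
import Mathlib

section
/- The Heisenberg–Weyl operators satisfy the composition law: for all a = (a₁, a₂) and b = (b₁, b₂) in ZMod d × ZMod d, T_a * T_b = ω^(((2⁻¹ * (a₁*b₂ - a₂*b₁)) : ZMod d).val) • T_(a+b). -/
open Matrix Complex

/-- ω = exp(2πi/d). -/
noncomputable def omegaC (d : ℕ) : ℂ := Complex.exp (2 * Real.pi * Complex.I / d)

/-- The clock matrix `Z`, with `Z x x = ω ^ x.val`. -/
noncomputable def Zmat (d : ℕ) : Matrix (ZMod d) (ZMod d) ℂ :=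
  Matrix.diagonal (fun x => omegaC d ^ x.val)

/-- The shift matrix `X`, with `X x y = 1` iff `x = y + 1`. -/
noncomputable def Xmat (d : ℕ) : Matrix (ZMod d) (ZMod d) ℂ :=
  Matrix.of fun x y => if x = y + 1 then 1 else 0

/-- The Heisenberg–Weyl operator `T_a`. -/
noncomputable def TW (d : ℕ) [NeZero d] (a : ZMod d × ZMod d) : Matrix (ZMod d) (ZMod d) ℂ :=
  omegaC d ^ ((-((2 : ZMod d)⁻¹ * a.1 * a.2)).val) • (Zmat d ^ a.1.val * Xmat d ^ a.2.val)

/-- The phase point operator at the origin, `A_0 = (1/d) • ∑ a, T_a`. -/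
noncomputable def Apoint0 (d : ℕ) [NeZero d] : Matrix (ZMod d) (ZMod d) ℂ :=
  (1 / (d : ℂ)) • ∑ a : ZMod d × ZMod d, TW d a

/-- The phase point operator `A_u = T_u * A_0 * T_uᴴ`. -/
noncomputable def Apoint (d : ℕ) [NeZero d] (u : ZMod d × ZMod d) : Matrix (ZMod d) (ZMod d) ℂ :=
  TW d u * Apoint0 d * (TW d u)ᴴ

section helpers
variable (d : ℕ) [NeZero d]

lemma omega_pow_d : omegaC d ^ d = 1 := by
  have hd : (d : ℂ) ≠ 0 := Nat.cast_ne_zero.mpr (NeZero.ne d)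
  rw [omegaC, ← Complex.exp_nat_mul]
  have h : (d : ℂ) * (2 * Real.pi * Complex.I / d) = 2 * Real.pi * Complex.I := by
    field_simp
  rw [h, Complex.exp_two_pi_mul_I]

lemma omega_pow_mod (n : ℕ) : omegaC d ^ (n % d) = omegaC d ^ n := by
  conv_rhs => rw [← Nat.div_add_mod n d]
  rw [pow_add, pow_mul, omega_pow_d, one_pow, one_mul]

/-- `e x = ω ^ x.val`. -/
noncomputable def eph (x : ZMod d) : ℂ := omegaC d ^ x.val

lemma eph_add (x y : ZMod d) : eph d (x + y) = eph d x * eph d y := by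
  rw [eph, eph, eph, ZMod.val_add, omega_pow_mod, pow_add]

lemma eph_nat (n : ℕ) : eph d (n : ZMod d) = omegaC d ^ n := by
  rw [eph, ZMod.val_natCast, omega_pow_mod]

lemma eph_nat_mul (n : ℕ) (x : ZMod d) :
    eph d ((n : ZMod d) * x) = omegaC d ^ (n * x.val) := by
  have : (n : ZMod d) * x = ((n * x.val : ℕ) : ZMod d) := by
    push_cast [ZMod.natCast_val, ZMod.cast_id]
    ring
  rw [this, eph_nat]

lemma Zmat_pow (n : ℕ) :
    Zmat d ^ n = Matrix.diagonal (fun x => omegaC d ^ (n * x.val)) := by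
  rw [Zmat, Matrix.diagonal_pow]
  ext x y
  by_cases h : x = y
  · subst h
    simp [Matrix.diagonal_apply_eq, ← pow_mul, mul_comm]
  · simp [Matrix.diagonal_apply_ne _ h]

lemma Xmat_pow (n : ℕ) :
    Xmat d ^ n = Matrix.of fun x y => if x = y + (n : ZMod d) then 1 else 0 := by
  induction n with
  | zero =>
    ext x y
    simp [Matrix.one_apply, eq_comm]
  | succ n ih =>
    rw [pow_succ, ih]
    ext x y
    rw [Matrix.mul_apply]
    simp only [Matrix.of_apply, Xmat, ite_mul, one_mul, zero_mul]
    have hc : ∀ z : ZMod d, (x = z + (n : ZMod d)) ↔ (z = x - (n : ZMod d)) := by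
      intro z; rw [eq_sub_iff_add_eq, eq_comm]
    simp_rw [hc]
    rw [Finset.sum_ite_eq' Finset.univ (x - (n : ZMod d))
      (fun z => if z = y + 1 then (1:ℂ) else 0)]
    simp only [Finset.mem_univ, if_true]
    simp_rw [sub_eq_iff_eq_add]
    push_cast
    ring_nf

end helpers

section more
variable (d : ℕ) [NeZero d]

lemma eph_def (x : ZMod d) : omegaC d ^ x.val = eph d x := rfl

lemma pow_mod_of_pow_eq_one {M : Type*} [Monoid M] {x : M} (h : x ^ d = 1) (n : ℕ) :
    x ^ (n % d) = x ^ n := by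
  conv_rhs => rw [← Nat.div_add_mod n d]
  rw [pow_add, pow_mul, h, one_pow, one_mul]

lemma Zmat_pow_d : Zmat d ^ d = 1 := by
  rw [Zmat_pow]
  have : (fun x : ZMod d => omegaC d ^ (d * x.val)) = fun _ => 1 := by
    funext x
    rw [pow_mul, omega_pow_d, one_pow]
  rw [this, Matrix.diagonal_one]

lemma Xmat_pow_d : Xmat d ^ d = 1 := by
  rw [Xmat_pow]
  ext x y
  simp [Matrix.one_apply, ZMod.natCast_self, eq_comm]

lemma Zmat_val_add (u v : ZMod d) :
    Zmat d ^ (u.val + v.val) = Zmat d ^ ((u + v).val) := by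
  rw [ZMod.val_add, pow_mod_of_pow_eq_one d (Zmat_pow_d d)]

lemma Xmat_val_add (u v : ZMod d) :
    Xmat d ^ (u.val + v.val) = Xmat d ^ ((u + v).val) := by
  rw [ZMod.val_add, pow_mod_of_pow_eq_one d (Xmat_pow_d d)]

lemma ZXent (j k : ℕ) :
    Zmat d ^ j * Xmat d ^ k =
      Matrix.of fun x y => if x = y + (k : ZMod d) then omegaC d ^ (j * x.val) else 0 := by
  rw [Zmat_pow, Xmat_pow]
  ext x y
  rw [Matrix.diagonal_mul]
  simp only [Matrix.of_apply, mul_ite, mul_one, mul_zero]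

lemma key (j k l m : ℕ) :
    (Zmat d ^ j * Xmat d ^ k) * (Zmat d ^ l * Xmat d ^ m) =
      eph d (-((l : ZMod d) * (k : ZMod d))) • (Zmat d ^ (j + l) * Xmat d ^ (k + m)) := by
  rw [ZXent, ZXent, ZXent]
  ext x y
  rw [Matrix.mul_apply, Matrix.smul_apply]
  simp only [Matrix.of_apply, ite_mul, zero_mul, smul_eq_mul]
  have hc : ∀ z : ZMod d, (x = z + (k : ZMod d)) ↔ (z = x - (k : ZMod d)) := by
    intro z; rw [eq_sub_iff_add_eq, eq_comm]
  simp_rw [hc]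
  rw [Finset.sum_ite_eq' Finset.univ (x - (k : ZMod d))
    (fun z => omegaC d ^ (j * x.val) * if z = y + (m : ZMod d) then omegaC d ^ (l * z.val) else 0)]
  simp only [Finset.mem_univ, if_true]
  by_cases h : x = y + ((k + m : ℕ) : ZMod d)
  · have h' : x - (k : ZMod d) = y + (m : ZMod d) := by
      rw [sub_eq_iff_eq_add, h]; push_cast; ring
    rw [if_pos h', if_pos h]
    have e1 : omegaC d ^ (l * (x - (k : ZMod d)).val) =
        omegaC d ^ (l * x.val) * eph d (-((l : ZMod d) * (k : ZMod d))) := by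
      rw [← eph_nat_mul, ← eph_nat_mul, ← eph_add]
      congr 1
      ring
    rw [e1, add_mul, pow_add]
    ring
  · have h' : ¬ (x - (k : ZMod d) = y + (m : ZMod d)) := by
      intro hh
      apply h
      rw [sub_eq_iff_eq_add.mp hh]
      push_cast; ring
    rw [if_neg h', if_neg h]
    ring

end more

/-- The Heisenberg–Weyl composition law. -/
theorem heisenberg_weyl_composition (d : ℕ) [NeZero d] (hodd : Odd d) (hd : 1 < d)
    (a b : ZMod d × ZMod d) :
    TW d a * TW d b =
      omegaC d ^ (((2 : ZMod d)⁻¹ * (a.1 * b.2 - a.2 * b.1)).val) • TW d (a + b) := by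
  obtain ⟨a1, a2⟩ := a
  obtain ⟨b1, b2⟩ := b
  have hu : IsUnit (2 : ZMod d) := by
    have h2' : ((2 : ℕ) : ZMod d) = 2 := by norm_num
    rw [← h2', ZMod.isUnit_iff_coprime]
    exact Nat.coprime_two_left.mpr hodd
  have h2 : (2 : ZMod d) * (2 : ZMod d)⁻¹ = 1 := ZMod.mul_inv_of_unit 2 hu
  simp only [TW, Prod.mk_add_mk]
  rw [smul_mul_assoc, mul_smul_comm, smul_smul,
    key d a1.val a2.val b1.val b2.val, smul_smul,
    Zmat_val_add, Xmat_val_add, smul_smul]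
  congr 1
  simp only [eph_def]
  rw [← eph_add, ← eph_add, ← eph_add]
  congr 1
  simp only [ZMod.natCast_val, ZMod.cast_id]
  linear_combination (a2 * b1) * h2
end

section
/- The phase point operator at the origin is the parity operator: A_0 has entries (A_0) x y = 1 if x + y = 0 and = 0 otherwise, where A_0 = (1/d) • Σ over a ∈ ZMod d × ZMod d of T_a. -/
open Matrix Complex

lemma pow_val_mod {d : ℕ} {ζ : ℂ} (hζ : ζ ^ d = 1) (m : ℕ) : ζ ^ (m % d) = ζ ^ m := by
  conv_rhs => rw [← Nat.div_add_mod m d]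
  rw [pow_add, pow_mul, hζ, one_pow, one_mul]

lemma Xpow_apply {d : ℕ} [NeZero d] (k : ℕ) (x y : ZMod d) :
    (Xmat d ^ k) x y = if x = y + (k : ZMod d) then 1 else 0 := by
  induction k generalizing x y with
  | zero => simp [Matrix.one_apply]
  | succ k ih =>
    rw [pow_succ', Matrix.mul_apply]
    simp only [ih]
    simp only [Xmat, Matrix.of_apply, ite_mul, one_mul, zero_mul]
    have hz : ∀ z : ZMod d, (x = z + 1) = (z = x - 1) := by
      intro z; simp [eq_sub_iff_add_eq, eq_comm]
    simp only [hz]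
    rw [Finset.sum_ite_eq' Finset.univ (x - 1) (fun z => if z = y + (k : ZMod d) then (1:ℂ) else 0)]
    have hc : (x - 1 = y + (k : ZMod d)) ↔ (x = y + ((k + 1 : ℕ) : ZMod d)) := by
      rw [sub_eq_iff_eq_add]; push_cast; rw [add_assoc]
    simp [hc]

lemma sum_pow_val {d : ℕ} [NeZero d] (η : ℂ) (h1 : η ^ d = 1) (hne1 : η ≠ 1) :
    ∑ a : ZMod d, η ^ a.val = 0 := by
  have : ∑ a : ZMod d, η ^ a.val = ∑ i ∈ Finset.range d, η ^ i := by
    refine Finset.sum_nbij' (fun a => a.val) (fun i => (i : ZMod d)) ?_ ?_ ?_ ?_ ?_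
    · intro a _; exact Finset.mem_range.mpr (ZMod.val_lt a)
    · intro i _; exact Finset.mem_univ _
    · intro a _; exact ZMod.natCast_rightInverse a
    · intro i hi; exact ZMod.val_cast_of_lt (Finset.mem_range.mp hi)
    · intro a _; rfl
  rw [this, geom_sum_eq hne1, h1, sub_self, zero_div]

/-- The phase point operator at the origin is the parity operator. -/
theorem phase_point_origin_is_parity (d : ℕ) [NeZero d] (hodd : Odd d) (hd : 1 < d)
    (x y : ZMod d) :
    Apoint0 d x y = if x + y = 0 then 1 else 0 := by
  classical
  have hne : (d : ℕ) ≠ 0 := NeZero.ne d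
  set ζ := omegaC d with hζdef
  have hζ : IsPrimitiveRoot ζ d := Complex.isPrimitiveRoot_exp d hne
  have hζ1 : ζ ^ d = 1 := hζ.pow_eq_one
  have mulpow : ∀ b c : ZMod d, ζ ^ ((b * c).val) = ζ ^ (b.val * c.val) := by
    intro b c; rw [ZMod.val_mul, pow_val_mod hζ1]
  have addpow : ∀ b c : ZMod d, ζ ^ ((b + c).val) = ζ ^ b.val * ζ ^ c.val := by
    intro b c; rw [ZMod.val_add, pow_val_mod hζ1, pow_add]
  have h2 : IsUnit (2 : ZMod d) := by
    rw [show ((2 : ZMod d)) = ((2 : ℕ) : ZMod d) by push_cast; ring, ZMod.isUnit_iff_coprime]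
    exact Nat.coprime_two_left.mpr hodd
  have h2i : (2 : ZMod d) * (2 : ZMod d)⁻¹ = 1 := ZMod.mul_inv_of_unit _ h2
  set i2 := (2 : ZMod d)⁻¹ with hi2
  have hTW : ∀ a : ZMod d × ZMod d, TW d a x y =
      if a.2 = x - y then ζ ^ ((a.1 * (i2 * (x + y))).val) else 0 := by
    intro a
    rw [TW, Matrix.smul_apply, Zmat, Matrix.diagonal_pow, Matrix.diagonal_mul,
      Xpow_apply, ZMod.natCast_val, ZMod.cast_id, Pi.pow_apply]
    by_cases h : a.2 = x - y
    · have hx : x = y + a.2 := by rw [h]; ring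
      rw [if_pos hx, if_pos h]
      simp only [smul_eq_mul, mul_one]
      rw [← pow_mul, ← mulpow x a.1, ← addpow]
      congr 2
      rw [h]
      linear_combination (-(a.1 * x)) * h2i
    · have hx : ¬ (x = y + a.2) := by
        intro hx; exact h (by rw [hx]; ring)
      rw [if_neg hx, if_neg h, mul_zero, smul_zero]
  rw [Apoint0, Matrix.smul_apply, Matrix.sum_apply]
  simp only [hTW]
  rw [Fintype.sum_prod_type]
  have hinner : ∀ a1 : ZMod d,
      (∑ a2 : ZMod d, if a2 = x - y then ζ ^ ((a1 * (i2 * (x + y))).val) else 0)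
        = ζ ^ ((a1 * (i2 * (x + y))).val) := by
    intro a1
    rw [Finset.sum_ite_eq' Finset.univ (x - y) (fun _ => ζ ^ ((a1 * (i2 * (x + y))).val))]
    simp
  simp only [hinner]
  set c := i2 * (x + y) with hc
  have hterm : ∀ a1 : ZMod d, ζ ^ ((a1 * c).val) = (ζ ^ c.val) ^ a1.val := by
    intro a1; rw [mulpow, mul_comm, pow_mul]
  simp only [hterm]
  by_cases hxy : x + y = 0
  · have hc0 : c = 0 := by rw [hc, hxy, mul_zero]
    simp only [hc0, ZMod.val_zero, pow_zero, one_pow, Finset.sum_const, Finset.card_univ,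
      ZMod.card, nsmul_eq_mul, mul_one, smul_eq_mul, if_pos hxy]
    field_simp
  · have hc0 : c ≠ 0 := by
      intro h
      apply hxy
      have : (2 : ZMod d) * c = x + y := by rw [hc, ← mul_assoc, h2i, one_mul]
      rw [← this, h, mul_zero]
    have hvpos : 0 < c.val :=
      Nat.pos_of_ne_zero (fun h => hc0 ((ZMod.val_eq_zero c).mp h))
    have hne1 : ζ ^ c.val ≠ 1 := hζ.pow_ne_one_of_pos_of_lt hvpos.ne' (ZMod.val_lt c)
    have hpd : (ζ ^ c.val) ^ d = 1 := by
      rw [← pow_mul, mul_comm, pow_mul, hζ1, one_pow]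
    rw [sum_pow_val _ hpd hne1]
    simp [hxy]
end

section
/- Every phase point operator is Hermitian: for all u ∈ ZMod d × ZMod d, A_uᴴ = A_u. -/
open Matrix Complex

section Aux
variable (d : ℕ) [NeZero d]

lemma omega_prim : IsPrimitiveRoot (omegaC d) d :=
  Complex.isPrimitiveRoot_exp d (NeZero.ne d)

lemma omega_pow_eq {m n : ℕ} (h : (m : ZMod d) = (n : ZMod d)) :
    omegaC d ^ m = omegaC d ^ n := by
  have hm : m % d = n % d := (ZMod.natCast_eq_natCast_iff m n d).mp h
  conv_lhs => rw [← Nat.div_add_mod m d, pow_add, pow_mul, (omega_prim d).pow_eq_one, one_pow, one_mul]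
  conv_rhs => rw [← Nat.div_add_mod n d, pow_add, pow_mul, (omega_prim d).pow_eq_one, one_pow, one_mul]
  rw [hm]

/-- χ a = ω ^ a.val, additive-to-multiplicative. -/
lemma chi_add (a b : ZMod d) :
    omegaC d ^ (a + b).val = omegaC d ^ a.val * omegaC d ^ b.val := by
  rw [← pow_add]
  apply omega_pow_eq
  push_cast [ZMod.natCast_val, ZMod.cast_id]
  ring

lemma Xpow (k : ℕ) :
    Xmat d ^ k = Matrix.of fun x y => if x = y + (k : ZMod d) then 1 else 0 := by
  induction k with
  | zero =>
    ext x y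
    simp [Matrix.one_apply, eq_comm]
  | succ k ih =>
    ext x y
    rw [pow_succ, ih]
    simp only [Matrix.mul_apply, Matrix.of_apply, Xmat]
    rw [Finset.sum_eq_single (y + 1)]
    · rw [if_pos rfl, mul_one]
      have : (y + 1) + (k : ZMod d) = y + ((k : ℕ) + 1 : ℕ) := by push_cast; ring
      rw [this]
    · intro b _ hb
      rw [if_neg hb, mul_zero]
    · simp

end Aux

section Aux2
variable (d : ℕ) [NeZero d]

lemma omega_ne_one (hd : 1 < d) : omegaC d ≠ 1 := by
  intro h
  have := (omega_prim d).pow_eq_one_iff_dvd 1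
  rw [pow_one, h] at this
  exact absurd (Nat.dvd_one.mp (this.mp rfl)) (by omega)

lemma sum_chi (hd : 1 < d) (c : ZMod d) :
    ∑ a : ZMod d, omegaC d ^ (a * c).val = if c = 0 then (d : ℂ) else 0 := by
  have hcast : ∀ a : ZMod d, omegaC d ^ (a * c).val = (omegaC d ^ c.val) ^ a.val := by
    intro a
    rw [← pow_mul]
    apply omega_pow_eq
    push_cast [ZMod.natCast_val, ZMod.cast_id]
    ring
  simp only [hcast]
  have hrange : ∑ a : ZMod d, (omegaC d ^ c.val) ^ a.val
      = ∑ i ∈ Finset.range d, (omegaC d ^ c.val) ^ i := by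
    refine Finset.sum_nbij' (fun a => a.val) (fun i => (i : ZMod d)) ?_ ?_ ?_ ?_ ?_
    · intro a _; exact Finset.mem_range.mpr (ZMod.val_lt a)
    · intro i _; exact Finset.mem_univ _
    · intro a _; simp [ZMod.natCast_val, ZMod.cast_id]
    · intro i hi; exact ZMod.val_cast_of_lt (Finset.mem_range.mp hi)
    · intro a _; rfl
  rw [hrange]
  by_cases hc : c = 0
  · simp [hc, Finset.sum_const]
  · rw [if_neg hc]
    have hne : omegaC d ^ c.val ≠ 1 := by
      intro h
      rw [(omega_prim d).pow_eq_one_iff_dvd] at h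
      have hlt := ZMod.val_lt c
      have : c.val = 0 := Nat.eq_zero_of_dvd_of_lt h hlt
      exact hc (ZMod.val_eq_zero c |>.mp this)
    rw [geom_sum_eq hne]
    have hone : (omegaC d ^ c.val) ^ d = 1 := by
      rw [← pow_mul, mul_comm, pow_mul, (omega_prim d).pow_eq_one, one_pow]
    rw [hone, sub_self, zero_div]

end Aux2

section Aux3
variable (d : ℕ) [NeZero d]

lemma TW_apply (a : ZMod d × ZMod d) (x y : ZMod d) :
    TW d a x y = if x = y + a.2
      then omegaC d ^ ((-((2 : ZMod d)⁻¹ * a.1 * a.2) + x * a.1).val) else 0 := by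
  rw [TW, Xpow, Zmat, Matrix.diagonal_pow]
  rw [Matrix.smul_apply, Matrix.diagonal_mul, Matrix.of_apply]
  have hc : ((a.2.val : ZMod d)) = a.2 := by simp [ZMod.natCast_val, ZMod.cast_id]
  rw [hc]
  by_cases h : x = y + a.2
  · rw [if_pos h, if_pos h, mul_one, smul_eq_mul, chi_add]
    congr 1
    rw [Pi.pow_apply, ← pow_mul]
    apply omega_pow_eq
    push_cast [ZMod.natCast_val, ZMod.cast_id]
    ring
  · rw [if_neg h, if_neg h, mul_zero, smul_zero]

lemma two_unit (hodd : Odd d) : (2 : ZMod d) * (2 : ZMod d)⁻¹ = 1 := by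
  have h2 : IsUnit (2 : ZMod d) := by
    have : ((2 : ℕ) : ZMod d) = (2 : ZMod d) := by push_cast; ring
    rw [← this, ZMod.isUnit_iff_coprime]
    exact hodd.coprime_two_left
  exact ZMod.mul_inv_of_unit 2 h2

lemma Apoint0_apply (hodd : Odd d) (hd : 1 < d) :
    Apoint0 d = Matrix.of fun x y => if x = -y then 1 else 0 := by
  have h21 := two_unit d hodd
  ext x y
  rw [Apoint0, Matrix.smul_apply, Matrix.sum_apply]
  simp only [TW_apply]
  rw [Fintype.sum_prod_type]
  have hstep : ∀ a1 : ZMod d,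
      (∑ a2 : ZMod d, if x = y + a2
        then omegaC d ^ ((-((2 : ZMod d)⁻¹ * a1 * a2) + x * a1).val) else 0)
      = omegaC d ^ ((a1 * ((2 : ZMod d)⁻¹ * (x + y))).val) := by
    intro a1
    rw [Finset.sum_eq_single (x - y)]
    · rw [if_pos (by ring)]
      congr 2
      linear_combination (-(a1 * x)) * h21
    · intro b _ hb
      rw [if_neg]
      intro h; apply hb; rw [h]; ring
    · simp
  simp only [hstep]
  rw [sum_chi d hd]
  by_cases hxy : x = -y
  · have : (2 : ZMod d)⁻¹ * (x + y) = 0 := by rw [hxy]; ring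
    rw [if_pos this, Matrix.of_apply, if_pos hxy, smul_eq_mul]
    have hd0 : (d : ℂ) ≠ 0 := Nat.cast_ne_zero.mpr (NeZero.ne d)
    field_simp
  · have : ¬ ((2 : ZMod d)⁻¹ * (x + y) = 0) := by
      intro h
      apply hxy
      have hx : x + y = 0 := by
        have h2 := congrArg (fun t => (2 : ZMod d) * t) h
        simpa [← mul_assoc, h21] using h2
      exact eq_neg_of_add_eq_zero_left hx
    rw [if_neg this, Matrix.of_apply, if_neg hxy, smul_zero]

end Aux3

/-- Every phase point operator is Hermitian. -/
theorem phase_point_hermitian (d : ℕ) [NeZero d] (hodd : Odd d) (hd : 1 < d)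
    (u : ZMod d × ZMod d) :
    (Apoint d u)ᴴ = Apoint d u := by
  have hA0 : (Apoint0 d)ᴴ = Apoint0 d := by
    rw [Apoint0_apply d hodd hd]
    ext x y
    simp only [Matrix.conjTranspose_apply, Matrix.of_apply]
    rw [apply_ite star, star_one, star_zero]
    congr 1
    exact propext ⟨fun h => by rw [h, neg_neg], fun h => by rw [h, neg_neg]⟩
  rw [Apoint, Matrix.conjTranspose_mul, Matrix.conjTranspose_mul,
    Matrix.conjTranspose_conjTranspose, hA0, ← Matrix.mul_assoc]
end
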